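/- arXiv:1505.04337 — 3 statements merged into one kernel-verified Lean document; each statement's English description precedes it below -/
import Mathlib

section
/- Stieltjes inversion at continuity points: if μ is a probability measure on ℝ with Cauchy transform G, and a < b are points with μ({a}) = μ({b}) = 0, then lim_{ε→0⁺} (-1/π) ∫_a^b Im G(t + iε) dt = μ([a,b]). -/
open MeasureTheory Filter intervalIntegral Real


-- Lemma A: the Poisson kernel interval integral
lemma poissonA (a b s ε : ℝ) (hε : 0 < ε) :
    ∫ t in a..b, ε / ((t - s)^2 + ε^2) =
      Real.arctan ((b - s)/ε) - Real.arctan ((a - s)/ε) := by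
  have h1 : ∀ t : ℝ, ε / ((t - s)^2 + ε^2) = ε⁻¹ * (1 / (1 + ((t-s)/ε)^2)) := by
    intro t
    rw [div_pow]
    field_simp
    ring
  simp_rw [h1]
  rw [intervalIntegral.integral_const_mul]
  have h2 : (∫ t in a..b, 1 / (1 + ((t - s)/ε)^2))
      = ∫ x in a - s..b - s, 1 / (1 + (x/ε)^2) :=
    intervalIntegral.integral_comp_sub_right (fun x => 1 / (1 + (x/ε)^2)) s
  rw [h2, intervalIntegral.integral_comp_div (fun x => 1 / (1 + x^2)) hε.ne',
    integral_one_div_one_add_sq]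
  rw [smul_eq_mul]
  field_simp

lemma invB (μ : Measure ℝ) [IsFiniteMeasure μ] (t ε : ℝ) (hε : 0 < ε) :
    Integrable (fun s : ℝ => ((t : ℂ) + (ε : ℂ) * Complex.I - (s : ℂ))⁻¹) μ := by
  set z : ℂ := (t : ℂ) + (ε : ℂ) * Complex.I with hz
  have him : ∀ s : ℝ, (z - (s : ℂ)).im = ε := by
    intro s; simp [hz]
  have hne : ∀ s : ℝ, z - (s : ℂ) ≠ 0 := by
    intro s h
    have := him s
    rw [h] at this
    simp at this
    exact hε.ne this
  have hcont : Continuous (fun s : ℝ => (z - (s : ℂ))⁻¹) := by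
    exact (Continuous.sub continuous_const Complex.continuous_ofReal).inv₀ hne
  refine Integrable.mono' (integrable_const ε⁻¹) hcont.aestronglyMeasurable ?_
  filter_upwards with s
  rw [norm_inv]
  have hle : ε ≤ ‖z - (s:ℂ)‖ := by
    have h := Complex.abs_im_le_norm (z - s)
    rw [him s, abs_of_pos hε] at h
    simpa using h
  exact inv_anti₀ hε hle

lemma imB (μ : Measure ℝ) [IsFiniteMeasure μ] (t ε : ℝ) (hε : 0 < ε) :
    (∫ s : ℝ, ((t : ℂ) + (ε : ℂ) * Complex.I - (s : ℂ))⁻¹ ∂μ).im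
      = ∫ s : ℝ, -(ε / ((t - s)^2 + ε^2)) ∂μ := by
  rw [← RCLike.im_eq_complex_im, ← integral_im (invB μ t ε hε)]
  congr 1
  ext s
  rw [RCLike.im_eq_complex_im, Complex.inv_im]
  have h1 : ((t : ℂ) + (ε : ℂ) * Complex.I - (s : ℂ)).im = ε := by simp
  have h2 : ((t : ℂ) + (ε : ℂ) * Complex.I - (s : ℂ)).re = t - s := by simp
  rw [Complex.normSq_apply, h1, h2]
  rw [neg_div]
  ring_nf

lemma fubiniC (μ : Measure ℝ) [IsFiniteMeasure μ] (a b ε : ℝ) (hab : a ≤ b) (hε : 0 < ε) :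
    (∫ t in a..b, (∫ s, ε / ((t - s)^2 + ε^2) ∂μ))
      = ∫ s, (∫ t in a..b, ε / ((t - s)^2 + ε^2)) ∂μ := by
  rw [intervalIntegral.integral_of_le hab]
  simp_rw [intervalIntegral.integral_of_le hab]
  have hfin : IsFiniteMeasure (volume.restrict (Set.Ioc a b)) :=
    ⟨by rw [Measure.restrict_apply_univ, Real.volume_Ioc]; exact ENNReal.ofReal_lt_top⟩
  have hcont : Continuous (fun p : ℝ × ℝ => ε / ((p.1 - p.2)^2 + ε^2)) := by
    apply continuous_const.div (by fun_prop)
    intro p; positivity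
  have hint : Integrable (Function.uncurry fun t s : ℝ => ε / ((t - s)^2 + ε^2))
      ((volume.restrict (Set.Ioc a b)).prod μ) := by
    refine Integrable.mono' (integrable_const ε⁻¹) hcont.aestronglyMeasurable ?_
    filter_upwards with p
    rcases p with ⟨t, s⟩
    simp only [Function.uncurry_apply_pair]
    rw [Real.norm_eq_abs, abs_of_nonneg (by positivity)]
    calc ε / ((t - s)^2 + ε^2) ≤ ε / ε^2 := by
          gcongr
          nlinarith [sq_nonneg (t - s)]
      _ = ε⁻¹ := by rw [sq]; field_simp
  exact integral_integral_swap hint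

lemma arctan_lim_pos (c : ℝ) (hc : 0 < c) :
    Tendsto (fun ε : ℝ => Real.arctan (c/ε)) (nhdsWithin 0 (Set.Ioi 0)) (nhds (π/2)) := by
  have h1 : Tendsto (fun ε : ℝ => c/ε) (nhdsWithin 0 (Set.Ioi 0)) atTop := by
    simp only [div_eq_mul_inv]
    exact Tendsto.const_mul_atTop hc tendsto_inv_nhdsGT_zero
  exact (tendsto_nhds_of_tendsto_nhdsWithin Real.tendsto_arctan_atTop).comp h1

lemma arctan_lim_neg (c : ℝ) (hc : c < 0) :
    Tendsto (fun ε : ℝ => Real.arctan (c/ε)) (nhdsWithin 0 (Set.Ioi 0)) (nhds (-(π/2))) := by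
  have h1 : Tendsto (fun ε : ℝ => c/ε) (nhdsWithin 0 (Set.Ioi 0)) atBot := by
    simp only [div_eq_mul_inv]
    exact (tendsto_const_mul_atBot_of_neg hc).2 tendsto_inv_nhdsGT_zero
  exact (tendsto_nhds_of_tendsto_nhdsWithin Real.tendsto_arctan_atBot).comp h1

lemma dctD (μ : Measure ℝ) [IsProbabilityMeasure μ] (a b : ℝ) (hab : a < b)
    (ha : μ {a} = 0) (hb : μ {b} = 0) :
    Tendsto (fun ε : ℝ =>
        ∫ s, (Real.arctan ((b - s)/ε) - Real.arctan ((a - s)/ε)) / π ∂μ)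
      (nhdsWithin 0 (Set.Ioi 0)) (nhds (μ (Set.Icc a b)).toReal) := by
  have hπ : (0:ℝ) < π := Real.pi_pos
  have key := MeasureTheory.tendsto_integral_filter_of_dominated_convergence
    (μ := μ) (l := nhdsWithin (0:ℝ) (Set.Ioi 0))
    (F := fun ε s => (Real.arctan ((b - s)/ε) - Real.arctan ((a - s)/ε)) / π)
    (f := Set.indicator (Set.Icc a b) (fun _ => (1:ℝ)))
    (bound := fun _ => (1:ℝ))
    ?_ ?_ ?_ ?_
  · have : ∫ s, Set.indicator (Set.Icc a b) (fun _ => (1:ℝ)) s ∂μ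
        = (μ (Set.Icc a b)).toReal := by
      rw [integral_indicator_const (1:ℝ) measurableSet_Icc]
      simp [mul_comm, measureReal_def]
    rwa [this] at key
  · -- measurability
    filter_upwards with ε
    exact (((Real.continuous_arctan.comp (by continuity)).sub
      (Real.continuous_arctan.comp (by continuity))).div_const π).aestronglyMeasurable
  · -- bound
    filter_upwards with ε
    filter_upwards with s
    rw [Real.norm_eq_abs, abs_div, abs_of_pos hπ, div_le_one hπ]
    have h1 : |Real.arctan ((b - s)/ε)| ≤ π/2 := abs_le.2
      ⟨(Real.neg_pi_div_two_lt_arctan _).le, (Real.arctan_lt_pi_div_two _).le⟩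
    have h2 : |Real.arctan ((a - s)/ε)| ≤ π/2 := abs_le.2
      ⟨(Real.neg_pi_div_two_lt_arctan _).le, (Real.arctan_lt_pi_div_two _).le⟩
    calc |Real.arctan ((b - s)/ε) - Real.arctan ((a - s)/ε)|
        ≤ |Real.arctan ((b - s)/ε)| + |Real.arctan ((a - s)/ε)| := abs_sub _ _
      _ ≤ π/2 + π/2 := by linarith
      _ = π := by ring
  · exact integrable_const 1
  · -- a.e. pointwise limit
    have hnull : μ ({a} ∪ {b}) = 0 := by
      rw [measure_union_null_iff]; exact ⟨ha, hb⟩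
    have hae : ∀ᵐ s ∂μ, s ≠ a ∧ s ≠ b := by
      refine ae_iff.2 (measure_mono_null ?_ hnull)
      intro s hs
      simp only [Set.mem_setOf_eq, not_and_or, not_not] at hs
      rcases hs with h | h <;> simp [h]
    filter_upwards [hae] with s hs
    obtain ⟨hsa, hsb⟩ := hs
    rcases lt_or_gt_of_ne hsa with h1 | h1
    · -- s < a
      have hind : Set.indicator (Set.Icc a b) (fun _ => (1:ℝ)) s = 0 := by
        apply Set.indicator_of_notMem
        simp only [Set.mem_Icc, not_and_or, not_le]
        left; exact h1
      rw [hind]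
      have h := ((arctan_lim_pos (b - s) (by linarith)).sub
        (arctan_lim_pos (a - s) (by linarith))).div_const π
      simpa using h
    · rcases lt_or_gt_of_ne hsb with h2 | h2
      · -- a < s < b
        have hind : Set.indicator (Set.Icc a b) (fun _ => (1:ℝ)) s = 1 :=
          Set.indicator_of_mem (Set.mem_Icc.2 ⟨le_of_lt h1, le_of_lt h2⟩) _
        rw [hind]
        have h := ((arctan_lim_pos (b - s) (by linarith)).sub
          (arctan_lim_neg (a - s) (by linarith))).div_const π
        have hval : (π/2 - -(π/2))/π = 1 := by field_simp; norm_num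
        rwa [hval] at h
      · -- b < s
        have hind : Set.indicator (Set.Icc a b) (fun _ => (1:ℝ)) s = 0 := by
          apply Set.indicator_of_notMem
          simp only [Set.mem_Icc, not_and_or, not_le]
          right; exact h2
        rw [hind]
        have h := ((arctan_lim_neg (b - s) (by linarith)).sub
          (arctan_lim_neg (a - s) (by linarith))).div_const π
        simpa using h

/-- Stieltjes inversion at continuity points: if `a < b` are not atoms of the
probability measure `μ` with Cauchy transform `G`, then
`lim_{ε→0⁺} (-1/π) ∫_a^b Im G(t + iε) dt = μ([a,b])`. -/
theorem stieltjes_inversion_at_continuity_points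
    (μ : Measure ℝ) [IsProbabilityMeasure μ]
    (G : ℂ → ℂ) (hG : ∀ z : ℂ, 0 < z.im → G z = ∫ t : ℝ, (z - (t : ℂ))⁻¹ ∂μ)
    (a b : ℝ) (hab : a < b) (ha : μ {a} = 0) (hb : μ {b} = 0) :
    Tendsto (fun ε : ℝ =>
        (-1 / Real.pi) * ∫ t in a..b, (G ((t : ℂ) + (ε : ℂ) * Complex.I)).im)
      (nhdsWithin 0 (Set.Ioi 0))
      (nhds (μ (Set.Icc a b)).toReal) := by
  have hπ : (0:ℝ) < π := Real.pi_pos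
  refine Tendsto.congr' ?_ (dctD μ a b hab ha hb)
  filter_upwards [self_mem_nhdsWithin] with ε hε
  have hε' : (0:ℝ) < ε := hε
  have h1 : ∀ t : ℝ, (G ((t:ℂ) + (ε:ℂ) * Complex.I)).im
      = -(∫ s, ε / ((t - s)^2 + ε^2) ∂μ) := by
    intro t
    rw [hG _ (by simp [hε']), imB μ t ε hε', MeasureTheory.integral_neg]
  simp only [h1]
  rw [intervalIntegral.integral_neg, fubiniC μ a b ε hab.le hε']
  have h2 : ∀ s : ℝ, (∫ t in a..b, ε / ((t - s)^2 + ε^2))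
      = Real.arctan ((b - s)/ε) - Real.arctan ((a - s)/ε) :=
    fun s => poissonA a b s ε hε'
  simp only [h2]
  rw [MeasureTheory.integral_div]
  ring
end

section
/- The Cauchy transform of the semicircle distribution: for z in the upper half-plane, ∫_{-2}^{2} (1/(z-t))·(1/(2π))√(4-t²) dt = (z - √(z²-4))/2, with the square root branch holomorphic on ℂ⁺ asymptotic to z at infinity. -/
open MeasureTheory Filter

noncomputable def SemiS (z : ℂ) : ℂ :=
  Complex.exp (Complex.log (z - 2) / 2) * Complex.exp (Complex.log (z + 2) / 2)

lemma semi_ne1 {z : ℂ} (hz : 0 < z.im) : z - 2 ≠ 0 := by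
  intro h
  have := congrArg Complex.im h
  simp at this; linarith

lemma semi_ne2 {z : ℂ} (hz : 0 < z.im) : z + 2 ≠ 0 := by
  intro h
  have := congrArg Complex.im h
  simp at this; linarith

lemma semiS_sq {z : ℂ} (hz : 0 < z.im) : SemiS z ^ 2 = z ^ 2 - 4 := by
  unfold SemiS
  rw [mul_pow, sq (Complex.exp _), sq (Complex.exp _), ← Complex.exp_add, ← Complex.exp_add]
  have h1 : Complex.log (z - 2) / 2 + Complex.log (z - 2) / 2 = Complex.log (z - 2) := by ring
  have h2 : Complex.log (z + 2) / 2 + Complex.log (z + 2) / 2 = Complex.log (z + 2) := by ring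
  rw [h1, h2, Complex.exp_log (semi_ne1 hz), Complex.exp_log (semi_ne2 hz)]
  ring

lemma arg_mem {w : ℂ} (hw : 0 < w.im) : 0 < w.arg ∧ w.arg < Real.pi := by
  constructor
  · rcases lt_or_eq_of_le (Complex.arg_nonneg_iff.2 hw.le) with h | h
    · exact h
    · exfalso; have := (Complex.arg_eq_zero_iff.1 h.symm).2; linarith
  · rcases lt_or_eq_of_le (Complex.arg_le_pi w) with h | h
    · exact h
    · exfalso; have := (Complex.arg_eq_pi_iff.1 h).2; linarith

lemma semiS_im {z : ℂ} (hz : 0 < z.im) : 0 < (SemiS z).im := by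
  unfold SemiS
  rw [← Complex.exp_add, Complex.exp_im]
  have h1 := arg_mem (show 0 < (z - 2).im by simp [hz])
  have h2 := arg_mem (show 0 < (z + 2).im by simp [hz])
  have him : (Complex.log (z - 2) / 2 + Complex.log (z + 2) / 2).im
      = ((z - 2).arg + (z + 2).arg) / 2 := by
    simp [Complex.add_im, Complex.div_im, Complex.log_im]
    ring
  rw [him]
  have : 0 < ((z - 2).arg + (z + 2).arg) / 2 := by linarith [h1.1, h2.1]
  have hlt : ((z - 2).arg + (z + 2).arg) / 2 < Real.pi := by linarith [h1.2, h2.2]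
  exact mul_pos (Real.exp_pos _) (Real.sin_pos_of_pos_of_lt_pi this hlt)

lemma semiS_contOn : ContinuousOn SemiS {z : ℂ | 0 < z.im} := by
  apply ContinuousOn.mul
  · apply ContinuousOn.cexp
    apply ContinuousOn.div_const
    apply ContinuousOn.clog (by fun_prop)
    intro z hz
    exact Complex.mem_slitPlane_iff.2 (Or.inr (by simp; exact ne_of_gt hz))
  · apply ContinuousOn.cexp
    apply ContinuousOn.div_const
    apply ContinuousOn.clog (by fun_prop)
    intro z hz
    exact Complex.mem_slitPlane_iff.2 (Or.inr (by simp; exact ne_of_gt hz))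

lemma semiS_ne {z : ℂ} (hz : 0 < z.im) : SemiS z ≠ 0 := by
  intro h
  have := semiS_im hz
  rw [h] at this; simp at this

lemma div_I_re (w : ℂ) (y : ℝ) (hy : y ≠ 0) : (w / (Complex.I * y)).re = w.im / y := by
  rw [Complex.div_re]
  simp [Complex.normSq_apply]
  field_simp

lemma branch (s : ℂ → ℂ)
    (hs_sq : ∀ z : ℂ, 0 < z.im → (s z) ^ 2 = z ^ 2 - 4)
    (hc : ContinuousOn s {z : ℂ | 0 < z.im})
    (hs_asymp : Tendsto (fun y : ℝ => s (Complex.I * y) / (Complex.I * y)) atTop (nhds 1)) :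
    ∀ z : ℂ, 0 < z.im → s z = SemiS z := by
  set U : Set ℂ := {z : ℂ | 0 < z.im} with hU
  have hUopen : IsOpen U := isOpen_lt continuous_const Complex.continuous_im
  have hUpre : IsPreconnected U := (convex_halfSpace_im_gt 0).isPreconnected
  have hprod : ∀ z ∈ U, (s z - SemiS z) * (s z + SemiS z) = 0 := by
    intro z hz
    have h1 := hs_sq z hz
    have h2 := semiS_sq hz
    linear_combination h1 - h2
  set A : Set ℂ := U ∩ (fun z => s z + SemiS z) ⁻¹' {0}ᶜ with hA
  set B : Set ℂ := U ∩ (fun z => s z - SemiS z) ⁻¹' {0}ᶜ with hB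
  have hAopen : IsOpen A := (hc.add semiS_contOn).isOpen_inter_preimage hUopen isOpen_compl_singleton
  have hBopen : IsOpen B := (hc.sub semiS_contOn).isOpen_inter_preimage hUopen isOpen_compl_singleton
  have hdisj : Disjoint A B := by
    rw [Set.disjoint_left]
    rintro z ⟨hzU, hz1⟩ ⟨_, hz2⟩
    have := hprod z hzU
    rcases mul_eq_zero.1 this with h | h
    · exact hz2 h
    · exact hz1 h
  have hcover : U ⊆ A ∪ B := by
    intro z hz
    by_cases h : s z + SemiS z = 0
    · right
      refine ⟨hz, ?_⟩
      simp only [Set.mem_preimage, Set.mem_compl_iff, Set.mem_singleton_iff]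
      intro h2
      have : SemiS z = 0 := by linear_combination (h - h2) / 2
      exact semiS_ne hz this
    · exact Or.inl ⟨hz, h⟩
  rcases hUpre.subset_or_subset hAopen hBopen hdisj hcover with hsub | hsub
  · intro z hz
    have hzA := hsub hz
    have h1 := hprod z hz
    rcases mul_eq_zero.1 h1 with h | h
    · exact sub_eq_zero.1 h
    · exact absurd h hzA.2
  · exfalso
    have hre : Tendsto (fun y : ℝ => (s (Complex.I * y) / (Complex.I * y)).re) atTop (nhds 1) := by
      have := (Complex.continuous_re.tendsto 1).comp hs_asymp
      exact this
    have hev : ∀ᶠ y : ℝ in atTop, (1/2 : ℝ) < (s (Complex.I * y) / (Complex.I * y)).re :=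
      hre.eventually (eventually_gt_nhds (by norm_num))
    rcases (hev.and (eventually_ge_atTop (1 : ℝ))).exists with ⟨y, hy1, hy2⟩
    have hyU : (Complex.I * y) ∈ U := by
      simp only [hU, Set.mem_setOf_eq]
      simp; linarith
    have hzB := hsub hyU
    have h1 := hprod _ hyU
    have hneg : s (Complex.I * y) = -SemiS (Complex.I * y) := by
      rcases mul_eq_zero.1 h1 with h | h
      · exact absurd h hzB.2
      · exact eq_neg_of_add_eq_zero_left h
    have hy0 : y ≠ 0 := by linarith
    rw [hneg] at hy1
    rw [div_I_re _ _ hy0] at hy1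
    have him : 0 < (SemiS (Complex.I * y)).im := semiS_im (by simp; linarith)
    simp only [Complex.neg_im] at hy1
    have : -(SemiS (Complex.I * y)).im / y < 0 := by
      apply div_neg_of_neg_of_pos <;> linarith
    linarith

noncomputable def omg (t : ℝ) : ℂ := ((Real.sqrt (4 - t^2) : ℂ) + t * Complex.I) / 2

noncomputable def phiAux (z S : ℂ) (t : ℝ) : ℂ :=
  ((4 - z^2) * (-(Complex.I / S)) *
    (Complex.log (omg t - Complex.I * (z - S) / 2)
      - Complex.log (omg t - Complex.I * (z + S) / 2))) / (2 * (Real.pi : ℂ))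
  + (z * (Real.arcsin (t / 2) : ℂ)) / (2 * (Real.pi : ℂ))
  - ((Real.sqrt (4 - t^2) : ℂ)) / (2 * (Real.pi : ℂ))

section main
variable {z S : ℂ} (hb : 0 < z.im) (hq : 0 < S.im) (hS2 : S ^ 2 = z ^ 2 - 4)

include hb hq hS2

lemma habs_zS : ‖z - S‖ < 2 := by
  have hpq : S.re * S.im = z.re * z.im := by
    have h := congrArg Complex.im hS2
    simp [pow_two, Complex.mul_im] at h
    linarith
  have hzrSr : 0 ≤ z.re * S.re := by
    have h : z.re * S.re * S.im = z.re ^ 2 * z.im := by linear_combination z.re * hpq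
    nlinarith [mul_nonneg (sq_nonneg z.re) hb.le, hq]
  have hprod4 : (z - S) * (z + S) = 4 := by linear_combination -hS2
  have habs4 : ‖z - S‖ * ‖z + S‖ = 4 := by
    rw [← norm_mul, hprod4]; simp
  have hsq : ‖z - S‖ ^ 2 < ‖z + S‖ ^ 2 := by
    rw [Complex.sq_norm, Complex.sq_norm, Complex.normSq_apply, Complex.normSq_apply]
    simp only [Complex.sub_re, Complex.sub_im, Complex.add_re, Complex.add_im]
    nlinarith [mul_pos hb hq, hzrSr]
  have h0 : 0 ≤ ‖z - S‖ := norm_nonneg _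
  have h1 : 0 ≤ ‖z + S‖ := norm_nonneg _
  nlinarith [hsq, habs4, h0, h1]

lemma habs_r1 : ‖Complex.I * (z - S) / 2‖ < 1 := by
  rw [norm_div, norm_mul]
  simp only [Complex.norm_I, one_mul, Complex.norm_ofNat]
  linarith [habs_zS hb hq hS2]

lemma slit1 (t : ℝ) : omg t - Complex.I * (z - S) / 2 ∈ Complex.slitPlane := by
  set q : ℂ := Complex.I * (z - S) / 2 with hqdef
  have habs1 : ‖q‖ < 1 := habs_r1 hb hq hS2
  have hnormq : q.re ^ 2 + q.im ^ 2 < 1 := by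
    have h1 : ‖q‖ ^ 2 = q.re ^ 2 + q.im ^ 2 := by
      rw [Complex.sq_norm, Complex.normSq_apply]; ring
    nlinarith [norm_nonneg q]
  set u := Real.sqrt (4 - t ^ 2) with hu
  have hu0 : 0 ≤ u := Real.sqrt_nonneg _
  have hre : (omg t - q).re = u / 2 - q.re := by
    simp [omg, Complex.div_re, Complex.normSq_apply, ← hu]
  have him : (omg t - q).im = t / 2 - q.im := by
    simp [omg, Complex.div_im, Complex.normSq_apply, ← hu]
  rw [Complex.mem_slitPlane_iff]
  by_cases h : (omg t - q).im = 0
  · left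
    rw [him] at h
    have hqim : q.im = t / 2 := by linarith
    have hqim2 : q.im ^ 2 = t ^ 2 / 4 := by rw [hqim]; ring
    have ht4 : t ^ 2 < 4 := by nlinarith [sq_nonneg q.re]
    have hu2 : u ^ 2 = 4 - t ^ 2 := Real.sq_sqrt (by linarith)
    have hq2 : q.re ^ 2 < u ^ 2 / 4 := by nlinarith
    rw [hre]
    nlinarith [hq2, hu0]
  · right; exact h

omit hS2 in
lemma slit2 (t : ℝ) : omg t - Complex.I * (z + S) / 2 ∈ Complex.slitPlane := by
  have hre : (omg t - Complex.I * (z + S) / 2).re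
      = Real.sqrt (4 - t ^ 2) / 2 + (z.im + S.im) / 2 := by
    simp [omg, Complex.div_re, Complex.normSq_apply]
    ring
  exact Complex.mem_slitPlane_iff.2 (Or.inl (by rw [hre]; positivity))

end main

section main2
variable {z S : ℂ} (hb : 0 < z.im) (hq : 0 < S.im) (hS2 : S ^ 2 = z ^ 2 - 4)
include hb hq hS2

lemma slit_ne1 (t : ℝ) : omg t - Complex.I * (z - S) / 2 ≠ 0 :=
  Complex.slitPlane_ne_zero (slit1 hb hq hS2 t)

omit hS2 in
lemma slit_ne2 (t : ℝ) : omg t - Complex.I * (z + S) / 2 ≠ 0 :=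
  Complex.slitPlane_ne_zero (slit2 hb hq t)

omit hb hS2 in
lemma hS0 : S ≠ 0 := by
  intro h; rw [h] at hq; simp at hq

omit hq hS2 in
lemma hzt (t : ℝ) : z - (t : ℂ) ≠ 0 := by
  intro h
  have := congrArg Complex.im h
  simp at this; linarith

omit hb hq hS2 in
lemma omg_cont : Continuous omg := by
  unfold omg
  apply Continuous.div_const
  exact (Complex.continuous_ofReal.comp (Real.continuous_sqrt.comp (by fun_prop))).add
    (Complex.continuous_ofReal.mul continuous_const)

lemma phiAux_cont : Continuous (phiAux z S) := by
  unfold phiAux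
  refine Continuous.sub (Continuous.add ?_ ?_) ?_
  · apply Continuous.div_const
    apply Continuous.mul continuous_const
    apply Continuous.sub
    · rw [continuous_iff_continuousAt]
      intro t
      exact ContinuousAt.clog ((omg_cont.sub continuous_const).continuousAt) (slit1 hb hq hS2 t)
    · rw [continuous_iff_continuousAt]
      intro t
      exact ContinuousAt.clog ((omg_cont.sub continuous_const).continuousAt) (slit2 hb hq t)
  · apply Continuous.div_const
    exact continuous_const.mul
      (Complex.continuous_ofReal.comp (Real.continuous_arcsin.comp (by fun_prop)))
  · apply Continuous.div_const
    exact Complex.continuous_ofReal.comp (Real.continuous_sqrt.comp (by fun_prop))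

lemma phiAux_deriv (t : ℝ) (ht : t ∈ Set.Ioo (-2 : ℝ) 2) :
    HasDerivAt (phiAux z S)
      ((z - t)⁻¹ * (((1 / (2 * Real.pi)) * Real.sqrt (4 - t ^ 2) : ℝ) : ℂ)) t := by
  obtain ⟨ht1, ht2⟩ := ht
  have h4t : (0 : ℝ) < 4 - t ^ 2 := by nlinarith
  set u := Real.sqrt (4 - t ^ 2) with hudef
  have hupos : 0 < u := Real.sqrt_pos.2 h4t
  have hu2 : u ^ 2 = 4 - t ^ 2 := Real.sq_sqrt h4t.le
  have hin : HasDerivAt (fun t : ℝ => 4 - t ^ 2) (-(2 * t)) t := by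
    simpa using (hasDerivAt_pow 2 t).const_sub 4
  have hu' : HasDerivAt (fun t : ℝ => Real.sqrt (4 - t ^ 2)) (-t / u) t := by
    have h := (Real.hasDerivAt_sqrt (ne_of_gt h4t)).comp t hin
    refine h.congr_deriv ?_
    rw [← hudef]; field_simp
  have homega : HasDerivAt omg ((((-t / u : ℝ) : ℂ) + Complex.I) / 2) t := by
    have h := ((hu'.ofReal_comp).add
      (((hasDerivAt_id t).ofReal_comp).mul_const Complex.I)).div_const 2
    exact h.congr_deriv (by simp)
  have hlog1 : HasDerivAt (fun t : ℝ => Complex.log (omg t - Complex.I * (z - S) / 2))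
      (((((-t / u : ℝ) : ℂ) + Complex.I) / 2) / (omg t - Complex.I * (z - S) / 2)) t :=
    (homega.sub_const _).clog_real (slit1 hb hq hS2 t)
  have hlog2 : HasDerivAt (fun t : ℝ => Complex.log (omg t - Complex.I * (z + S) / 2))
      (((((-t / u : ℝ) : ℂ) + Complex.I) / 2) / (omg t - Complex.I * (z + S) / 2)) t :=
    (homega.sub_const _).clog_real (slit2 hb hq t)
  have harc : HasDerivAt (fun t : ℝ => Real.arcsin (t / 2))
      (1 / Real.sqrt (1 - (t / 2) ^ 2) * (1 / 2)) t := by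
    have h := (Real.hasDerivAt_arcsin (by intro h; simp at h; linarith)
      (by intro h; simp at h; linarith)).comp t ((hasDerivAt_id t).div_const 2)
    simp at h; simp only [one_div]; exact h
  have hsq2 : Real.sqrt (1 - (t / 2) ^ 2) = u / 2 := by
    rw [show (1 - (t / 2) ^ 2 : ℝ) = (u / 2) ^ 2 by field_simp; linarith [hu2]]
    exact Real.sqrt_sq (by positivity)
  have hfull := ((((hlog1.sub hlog2).const_mul ((4 - z ^ 2) * (-(Complex.I / S)))).div_const
      (2 * (Real.pi : ℂ))).add
      (((harc.ofReal_comp).const_mul z).div_const (2 * (Real.pi : ℂ)))).sub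
      ((hu'.ofReal_comp).div_const (2 * (Real.pi : ℂ)))
  have hgoal : HasDerivAt (phiAux z S) _ t := hfull
  convert hgoal using 1
  rw [hsq2]
  have hb1 := slit_ne1 hb hq hS2 t
  have hc1 := slit_ne2 hb hq t
  have hu0 : (u : ℂ) ≠ 0 := by exact_mod_cast hupos.ne'
  have hzt' := hzt hb t
  have hS0' := hS0 hq
  have hu2c : (u : ℂ) ^ 2 = 4 - (t : ℂ) ^ 2 := by
    have := congrArg (fun x : ℝ => (x : ℂ)) hu2
    push_cast at this; exact this
  have homgval : omg t = ((u : ℂ) + t * Complex.I) / 2 := by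
    unfold omg; rw [← hudef]
  have hA : (omg t - Complex.I * (z - S) / 2) * (omg t - Complex.I * (z + S) / 2)
      = Complex.I * omg t * ((t : ℂ) - z) := by
    rw [homgval]
    linear_combination (1/4 : ℂ) * hu2c + ((4 - (t:ℂ)^2)/4) * Complex.I_sq
      + (-(Complex.I^2)/4) * hS2
  have haom : ((((-t / u : ℝ)) : ℂ) + Complex.I) / 2 = Complex.I * omg t / (u : ℂ) := by
    rw [homgval]; push_cast; field_simp
    linear_combination (-(t:ℂ)) * Complex.I_sq
  have hsum : (((-t / u : ℝ) : ℂ) + Complex.I) / 2 / (omg t - Complex.I * (z - S) / 2)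
      - (((-t / u : ℝ) : ℂ) + Complex.I) / 2 / (omg t - Complex.I * (z + S) / 2)
      = Complex.I * S / ((z - (t : ℂ)) * (u : ℂ)) := by
    rw [haom, div_div, div_div,
      div_sub_div _ _ (mul_ne_zero hu0 hb1) (mul_ne_zero hu0 hc1),
      div_eq_div_iff (mul_ne_zero (mul_ne_zero hu0 hb1) (mul_ne_zero hu0 hc1))
        (mul_ne_zero hzt' hu0)]
    linear_combination (-(Complex.I) * S * ((u:ℂ))^2) * hA
  rw [hsum]
  have hpi : (Real.pi : ℂ) ≠ 0 := by exact_mod_cast Real.pi_ne_zero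
  have hII : (-(Complex.I / S)) * (Complex.I * S) = 1 := by
    field_simp
    linear_combination (-1:ℂ) * Complex.I_sq
  have hterm : (4 - z ^ 2) * (-(Complex.I / S)) * (Complex.I * S / ((z - (t:ℂ)) * (u:ℂ)))
      / (2 * (Real.pi : ℂ)) = (4 - z ^ 2) / ((z - (t:ℂ)) * (u:ℂ) * (2 * (Real.pi : ℂ))) := by
    rw [mul_assoc, ← mul_div_assoc, hII, mul_one_div, div_div]
  rw [hterm]
  obtain ⟨w, hw⟩ : ∃ w : ℂ, z = w + (t : ℂ) := ⟨z - t, by ring⟩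
  subst hw
  have hw0 : w ≠ 0 := by simpa using hzt'
  push_cast
  field_simp [hpi, hu0, hw0]
  linear_combination hu2c

end main2

section main3
variable {z S : ℂ} (hb : 0 < z.im) (hq : 0 < S.im) (hS2 : S ^ 2 = z ^ 2 - 4)
include hb hq hS2

omit hb hq hS2 in
lemma r2_re : (Complex.I * (z + S) / 2).re = -(z.im + S.im) / 2 := by
  simp [Complex.div_re, Complex.normSq_apply]

lemma Xlog :
    Complex.log (Complex.I - Complex.I * (z - S) / 2)
      - Complex.log (-Complex.I - Complex.I * (z - S) / 2)
      - Complex.log (Complex.I - Complex.I * (z + S) / 2)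
      + Complex.log (-Complex.I - Complex.I * (z + S) / 2)
      = (Real.pi : ℂ) * Complex.I := by
  have habs1 := habs_r1 hb hq hS2
  have him1 : |(Complex.I * (z - S) / 2).im| < 1 :=
    lt_of_le_of_lt (Complex.abs_im_le_norm _) habs1
  rw [abs_lt] at him1
  have ha_im : 0 < (Complex.I - Complex.I * (z - S) / 2).im := by
    simp only [Complex.sub_im, Complex.I_im]; linarith [him1.2]
  have hb_im : (-Complex.I - Complex.I * (z - S) / 2).im < 0 := by
    simp only [Complex.sub_im, Complex.neg_im, Complex.I_im]; linarith [him1.1]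
  have hc_re : 0 < (Complex.I - Complex.I * (z + S) / 2).re := by
    simp only [Complex.sub_re, Complex.I_re, r2_re]; linarith
  have hd_re : 0 < (-Complex.I - Complex.I * (z + S) / 2).re := by
    simp only [Complex.sub_re, Complex.neg_re, Complex.I_re, r2_re]; linarith
  have ha0 : (Complex.I - Complex.I * (z - S) / 2) ≠ 0 := by
    intro h; rw [h] at ha_im; simp at ha_im
  have hb0 : (-Complex.I - Complex.I * (z - S) / 2) ≠ 0 := by
    intro h; rw [h] at hb_im; simp at hb_im
  have hc0 : (Complex.I - Complex.I * (z + S) / 2) ≠ 0 := by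
    intro h; rw [h] at hc_re; simp at hc_re
  have hd0 : (-Complex.I - Complex.I * (z + S) / 2) ≠ 0 := by
    intro h; rw [h] at hd_re; simp at hd_re
  have had : (Complex.I - Complex.I * (z - S) / 2) * (-Complex.I - Complex.I * (z + S) / 2)
      = S := by
    linear_combination (-S) * Complex.I_sq - (Complex.I ^ 2 / 4) * hS2
  have hbc : (-Complex.I - Complex.I * (z - S) / 2) * (Complex.I - Complex.I * (z + S) / 2)
      = -S := by
    linear_combination S * Complex.I_sq - (Complex.I ^ 2 / 4) * hS2
  have hexp : Complex.exp (Complex.log (Complex.I - Complex.I * (z - S) / 2)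
      - Complex.log (-Complex.I - Complex.I * (z - S) / 2)
      - Complex.log (Complex.I - Complex.I * (z + S) / 2)
      + Complex.log (-Complex.I - Complex.I * (z + S) / 2)) = -1 := by
    rw [Complex.exp_add, Complex.exp_sub, Complex.exp_sub,
      Complex.exp_log ha0, Complex.exp_log hb0, Complex.exp_log hc0, Complex.exp_log hd0]
    rw [div_div, div_mul_eq_mul_div, div_eq_iff (mul_ne_zero hb0 hc0), had, hbc]
    ring
  have hexp1 : Complex.exp (Complex.log (Complex.I - Complex.I * (z - S) / 2)
      - Complex.log (-Complex.I - Complex.I * (z - S) / 2)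
      - Complex.log (Complex.I - Complex.I * (z + S) / 2)
      + Complex.log (-Complex.I - Complex.I * (z + S) / 2) - (Real.pi : ℂ) * Complex.I)
      = 1 := by
    rw [Complex.exp_sub, hexp, Complex.exp_pi_mul_I]; norm_num
  obtain ⟨n, hn⟩ := Complex.exp_eq_one_iff.1 hexp1
  have him := congrArg Complex.im hn
  simp only [Complex.sub_im, Complex.add_im, Complex.log_im, Complex.mul_im, Complex.mul_re,
    Complex.I_im, Complex.I_re, Complex.ofReal_re, Complex.ofReal_im, Complex.intCast_im,
    Complex.intCast_re, Complex.re_ofNat, Complex.im_ofNat] at him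
  have harga := arg_mem ha_im
  have hargb1 : (-Complex.I - Complex.I * (z - S) / 2).arg < 0 := Complex.arg_neg_iff.2 hb_im
  have hargb2 := Complex.neg_pi_lt_arg (-Complex.I - Complex.I * (z - S) / 2)
  have hargc : |(Complex.I - Complex.I * (z + S) / 2).arg| < Real.pi / 2 :=
    Complex.abs_arg_lt_pi_div_two_iff.2 (Or.inl hc_re)
  have hargd : |(-Complex.I - Complex.I * (z + S) / 2).arg| < Real.pi / 2 :=
    Complex.abs_arg_lt_pi_div_two_iff.2 (Or.inl hd_re)
  rw [abs_lt] at hargc hargd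
  have hn0 : n = 0 := by
    have h1 : (-1 : ℝ) < n := by nlinarith [Real.pi_pos]
    have h2 : (n : ℝ) < 1 := by nlinarith [Real.pi_pos]
    have h1' : (-1 : ℤ) < n := by exact_mod_cast h1
    have h2' : n < (1 : ℤ) := by exact_mod_cast h2
    omega
  rw [hn0] at hn
  simpa [sub_eq_zero] using hn

end main3

section main4
variable {z S : ℂ} (hb : 0 < z.im) (hq : 0 < S.im) (hS2 : S ^ 2 = z ^ 2 - 4)
include hb hq hS2

lemma phiAux_eval : phiAux z S 2 - phiAux z S (-2) = (z - S) / 2 := by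
  have h2 : omg 2 = Complex.I := by
    unfold omg
    rw [show (4 - (2:ℝ)^2 : ℝ) = 0 by norm_num, Real.sqrt_zero]
    push_cast; ring
  have hm2 : omg (-2) = -Complex.I := by
    unfold omg
    rw [show (4 - (-2:ℝ)^2 : ℝ) = 0 by norm_num, Real.sqrt_zero]
    push_cast; ring
  have hX := Xlog hb hq hS2
  have hpi : (Real.pi : ℂ) ≠ 0 := by exact_mod_cast Real.pi_ne_zero
  have hS0' := hS0 hq
  unfold phiAux
  rw [h2, hm2]
  rw [show ((2:ℝ)/2 : ℝ) = 1 by norm_num, show ((-2:ℝ)/2 : ℝ) = -1 by norm_num,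
    Real.arcsin_one, Real.arcsin_neg_one,
    show (4 - (2:ℝ)^2 : ℝ) = 0 by norm_num, show (4 - (-2:ℝ)^2 : ℝ) = 0 by norm_num,
    Real.sqrt_zero]
  push_cast
  set La := Complex.log (Complex.I - Complex.I * (z - S) / 2) with hLa
  set Lb := Complex.log (-Complex.I - Complex.I * (z - S) / 2) with hLb
  set Lc := Complex.log (Complex.I - Complex.I * (z + S) / 2) with hLc
  set Ld := Complex.log (-Complex.I - Complex.I * (z + S) / 2) with hLd
  field_simp
  linear_combination (2*Complex.I*(z^2-4)) * hX + (2*(Real.pi:ℂ)) * hS2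
    + (2*(Real.pi:ℂ)*(z^2-4)) * Complex.I_sq

lemma semicircle_main :
    (∫ t in Set.Icc (-2 : ℝ) 2,
        (z - (t : ℂ))⁻¹ * (((1 / (2 * Real.pi)) * Real.sqrt (4 - t ^ 2) : ℝ) : ℂ))
      = (z - S) / 2 := by
  have hf : Continuous (fun t : ℝ =>
      (z - (t : ℂ))⁻¹ * (((1 / (2 * Real.pi)) * Real.sqrt (4 - t ^ 2) : ℝ) : ℂ)) := by
    apply Continuous.mul
    · exact (continuous_const.sub Complex.continuous_ofReal).inv₀ (fun t => hzt hb t)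
    · exact Complex.continuous_ofReal.comp
        (continuous_const.mul (Real.continuous_sqrt.comp (by fun_prop)))
  rw [MeasureTheory.integral_Icc_eq_integral_Ioc,
    ← intervalIntegral.integral_of_le (by norm_num : (-2:ℝ) ≤ 2)]
  rw [intervalIntegral.integral_eq_sub_of_hasDerivAt_of_tendsto (by norm_num)
    (fun t ht => phiAux_deriv hb hq hS2 t ht)
    (hf.intervalIntegrable _ _)
    (((phiAux_cont hb hq hS2).continuousAt).tendsto.mono_left nhdsWithin_le_nhds)
    (((phiAux_cont hb hq hS2).continuousAt).tendsto.mono_left nhdsWithin_le_nhds)]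
  exact phiAux_eval hb hq hS2

end main4

/-- The Cauchy transform of the semicircle distribution: for `z` in the upper
half-plane, `∫_{-2}^{2} (1/(z-t))·(1/(2π))√(4-t²) dt = (z - √(z²-4))/2`,
where `s` is the branch of the square root of `z²-4` holomorphic on the upper
half-plane and asymptotic to `z` at infinity. -/
theorem semicircle_cauchy_transform
    (s : ℂ → ℂ)
    (hs_sq : ∀ z : ℂ, 0 < z.im → (s z) ^ 2 = z ^ 2 - 4)
    (hs_holo : DifferentiableOn ℂ s {z : ℂ | 0 < z.im})
    (hs_asymp : Tendsto (fun y : ℝ => s (Complex.I * y) / (Complex.I * y))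
      atTop (nhds 1)) :
    ∀ z : ℂ, 0 < z.im →
      (∫ t in Set.Icc (-2 : ℝ) 2,
          (z - (t : ℂ))⁻¹ * (((1 / (2 * Real.pi)) * Real.sqrt (4 - t ^ 2) : ℝ) : ℂ))
        = (z - s z) / 2 := by
  intro z hz
  have hbr := branch s hs_sq hs_holo.continuousOn hs_asymp z hz
  rw [hbr]
  exact semicircle_main hz (semiS_im hz) (semiS_sq hz)
end

section
/- Uniqueness of the subordination fixed point: let f : ℂ⁺ → ℂ⁺ be a holomorphic self-map of the upper half-plane that is not an automorphism and not the identity; then f has at most one fixed point in ℂ⁺, and if w is a fixed point then the iterates f^{∘n}(z) converge to w for every z ∈ ℂ⁺ (Denjoy–Wolff). -/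
open Filter Metric Set

noncomputable def dwPhi (w z : ℂ) : ℂ := (z - w) / (z - (starRingEnd ℂ) w)
noncomputable def dwPsi (w u : ℂ) : ℂ := (w - (starRingEnd ℂ) w * u) / (1 - u)

lemma dwPsi_im (w u : ℂ) :
    (dwPsi w u).im = (w.im * (1 - Complex.normSq u)) / Complex.normSq (1 - u) := by
  rw [dwPsi, Complex.div_im, div_sub_div_same]
  congr 1
  simp only [Complex.normSq_apply, Complex.sub_re, Complex.sub_im, Complex.mul_re,
    Complex.mul_im, Complex.conj_re, Complex.conj_im, Complex.one_re, Complex.one_im]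
  ring

lemma dwPsi_mem {w u : ℂ} (hw : 0 < w.im) (hu : ‖u‖ < 1) : 0 < (dwPsi w u).im := by
  have hu1 : u ≠ 1 := by intro h; rw [h] at hu; simp at hu
  have h1 : Complex.normSq u < 1 := by
    have := Complex.normSq_eq_norm_sq u
    rw [this]
    nlinarith [norm_nonneg u]
  have h2 : 0 < Complex.normSq (1 - u) := by
    rw [Complex.normSq_pos]; exact sub_ne_zero.2 (Ne.symm hu1)
  rw [dwPsi_im]
  exact div_pos (by nlinarith) h2

lemma dwNe {w z : ℂ} (hw : 0 < w.im) (hz : 0 < z.im) : z - (starRingEnd ℂ) w ≠ 0 := by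
  intro h
  have : z = (starRingEnd ℂ) w := by linear_combination h
  rw [this] at hz
  simp only [Complex.conj_im] at hz
  linarith

lemma dwNe1 {u : ℂ} (hu : ‖u‖ < 1) : (1 : ℂ) - u ≠ 0 := by
  intro h
  have : u = 1 := by linear_combination -h
  rw [this] at hu; simp at hu

lemma dwPhi_mem {w z : ℂ} (hw : 0 < w.im) (hz : 0 < z.im) : ‖dwPhi w z‖ < 1 := by
  have hne : z - (starRingEnd ℂ) w ≠ 0 := dwNe hw hz
  have key : Complex.normSq (z - w) < Complex.normSq (z - (starRingEnd ℂ) w) := by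
    simp only [Complex.normSq_apply, Complex.sub_re, Complex.sub_im, Complex.conj_re,
      Complex.conj_im]
    nlinarith
  have h1 : ‖z - w‖ < ‖z - (starRingEnd ℂ) w‖ := by
    rw [Complex.norm_def, Complex.norm_def]
    exact Real.sqrt_lt_sqrt (Complex.normSq_nonneg _) key
  rw [dwPhi, norm_div]
  rw [div_lt_one (norm_pos_iff.mpr hne)]
  exact h1

lemma dwPsi_phi {w z : ℂ} (hw : 0 < w.im) (hz : 0 < z.im) : dwPsi w (dwPhi w z) = z := by
  have h1 := dwNe hw hz
  have h2 := dwNe1 (dwPhi_mem hw hz)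
  rw [dwPhi] at h2 ⊢
  rw [dwPsi]
  rw [div_eq_iff h2]
  field_simp
  ring

lemma dwPhi_psi {w u : ℂ} (hw : 0 < w.im) (hu : ‖u‖ < 1) : dwPhi w (dwPsi w u) = u := by
  have h1 := dwNe1 hu
  have h2 := dwNe hw (dwPsi_mem hw hu)
  rw [dwPsi] at h2 ⊢
  rw [dwPhi]
  rw [div_eq_iff h2]
  field_simp
  ring

lemma dwPsi_zero (w : ℂ) : dwPsi w 0 = w := by simp [dwPsi]

lemma dwPsi_diffAt {w u : ℂ} (hu : ‖u‖ < 1) : DifferentiableAt ℂ (dwPsi w) u := by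
  have h := dwNe1 hu
  unfold dwPsi
  exact ((differentiableAt_const w).sub ((differentiableAt_const _).mul differentiableAt_id)).div
    ((differentiableAt_const 1).sub differentiableAt_id) h

lemma dwPhi_diffAt {w z : ℂ} (hw : 0 < w.im) (hz : 0 < z.im) :
    DifferentiableAt ℂ (dwPhi w) z := by
  have h := dwNe hw hz
  unfold dwPhi
  exact (differentiableAt_id.sub (differentiableAt_const w)).div
    (differentiableAt_id.sub (differentiableAt_const _)) h

lemma disk_iter (g : ℂ → ℂ) (hd : DifferentiableOn ℂ g (ball 0 1))
    (h0 : g 0 = 0)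
    (hlt : ∀ u ∈ ball (0:ℂ) 1, ‖dslope g 0 u‖ < 1)
    {z : ℂ} (hz : z ∈ ball (0:ℂ) 1) :
    Tendsto (fun n : ℕ => g^[n] z) atTop (nhds 0) := by
  set r : ℝ := ‖z‖ with hr
  have hr1 : r < 1 := by rwa [← mem_ball_zero_iff]
  have hKsub : closedBall (0:ℂ) r ⊆ ball 0 1 := closedBall_subset_ball hr1
  have hcont : ContinuousOn (fun u => ‖dslope g 0 u‖) (closedBall (0:ℂ) r) :=
    (((Complex.differentiableOn_dslope (isOpen_ball.mem_nhds (mem_ball_self one_pos))).mpr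
      hd).continuousOn.mono hKsub).norm
  have hzK : z ∈ closedBall (0:ℂ) r := by simp [mem_closedBall, dist_zero_right, hr]
  have hKne : (closedBall (0:ℂ) r).Nonempty := ⟨z, hzK⟩
  obtain ⟨u₀, hu₀K, hmax⟩ := (isCompact_closedBall (0:ℂ) r).exists_isMaxOn hKne hcont
  set c : ℝ := ‖dslope g 0 u₀‖ with hc
  have hc1 : c < 1 := hlt u₀ (hKsub hu₀K)
  have hc0 : 0 ≤ c := norm_nonneg _
  have hbound : ∀ u ∈ closedBall (0:ℂ) r, ‖dslope g 0 u‖ ≤ c := fun u hu => hmax hu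
  have hgu : ∀ u ∈ closedBall (0:ℂ) r, ‖g u‖ ≤ c * ‖u‖ := by
    intro u hu
    rcases eq_or_ne u 0 with rfl | hu0
    · simp [h0]
    · have hds : dslope g 0 u = g u / u := by
        rw [dslope_of_ne _ hu0, slope_def_field, h0, sub_zero, sub_zero]
      have hpos : 0 < ‖u‖ := norm_pos_iff.mpr hu0
      have h2 : ‖g u / u‖ ≤ c := hds ▸ hbound u hu
      rwa [norm_div, div_le_iff₀ hpos] at h2
  have hiter : ∀ n : ℕ, g^[n] z ∈ closedBall (0:ℂ) r ∧ ‖g^[n] z‖ ≤ c ^ n * r := by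
    intro n
    induction n with
    | zero => exact ⟨hzK, by simp [hr]⟩
    | succ n ih =>
      obtain ⟨hmem, hle⟩ := ih
      have h1 : ‖g (g^[n] z)‖ ≤ c * ‖g^[n] z‖ := hgu _ hmem
      have hnorm : ‖g^[n] z‖ ≤ r := by simpa [mem_closedBall, dist_zero_right] using hmem
      constructor
      · rw [Function.iterate_succ_apply', mem_closedBall, dist_zero_right]
        calc ‖g (g^[n] z)‖ ≤ c * ‖g^[n] z‖ := h1
          _ ≤ 1 * r := mul_le_mul hc1.le hnorm (norm_nonneg _) zero_le_one
          _ = r := one_mul r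
      · rw [Function.iterate_succ_apply']
        calc ‖g (g^[n] z)‖ ≤ c * ‖g^[n] z‖ := h1
          _ ≤ c * (c ^ n * r) := mul_le_mul_of_nonneg_left hle hc0
          _ = c ^ (n + 1) * r := by ring
  rw [tendsto_zero_iff_norm_tendsto_zero]
  have hto : Tendsto (fun n : ℕ => c ^ n * r) atTop (nhds 0) := by
    have := (tendsto_pow_atTop_nhds_zero_of_lt_one hc0 hc1).mul_const r
    simpa using this
  exact squeeze_zero (fun n => norm_nonneg _) (fun n => (hiter n).2) hto

/-- Denjoy–Wolff: a holomorphic self-map of the upper half-plane `H` which is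
neither an automorphism of `H` nor the identity has at most one fixed point in
`H`, and if `w` is a fixed point then the iterates converge to `w` from every
starting point in `H`. -/
theorem denjoy_wolff_upper_half_plane
    (f : ℂ → ℂ)
    (hmaps : Set.MapsTo f {z : ℂ | 0 < z.im} {z : ℂ | 0 < z.im})
    (hholo : DifferentiableOn ℂ f {z : ℂ | 0 < z.im})
    (hnotaut : ¬ ∃ g : ℂ → ℂ,
        Set.MapsTo g {z : ℂ | 0 < z.im} {z : ℂ | 0 < z.im} ∧
        DifferentiableOn ℂ g {z : ℂ | 0 < z.im} ∧
        (∀ z ∈ {z : ℂ | 0 < z.im}, g (f z) = z) ∧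
        (∀ z ∈ {z : ℂ | 0 < z.im}, f (g z) = z))
    (hnotid : ¬ ∀ z ∈ {z : ℂ | 0 < z.im}, f z = z) :
    (∀ w₁ ∈ {z : ℂ | 0 < z.im}, ∀ w₂ ∈ {z : ℂ | 0 < z.im},
        f w₁ = w₁ → f w₂ = w₂ → w₁ = w₂) ∧
      (∀ w ∈ {z : ℂ | 0 < z.im}, f w = w →
        ∀ z ∈ {z : ℂ | 0 < z.im},
          Tendsto (fun n : ℕ => f^[n] z) atTop (nhds w)) := by
  have hS : IsOpen {z : ℂ | 0 < z.im} := isOpen_lt continuous_const Complex.continuous_im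
  have key : ∀ w ∈ {z : ℂ | 0 < z.im}, f w = w → ∀ z ∈ {z : ℂ | 0 < z.im},
      Tendsto (fun n : ℕ => f^[n] z) atTop (nhds w) := by
    intro w hw hfw z hz
    have hwim : 0 < w.im := hw
    have hzim : 0 < z.im := hz
    set g : ℂ → ℂ := fun u => dwPhi w (f (dwPsi w u)) with hg
    have hgmem : ∀ u ∈ ball (0:ℂ) 1, 0 < (f (dwPsi w u)).im ∧ ‖g u‖ < 1 := by
      intro u hu
      have h1 : 0 < (dwPsi w u).im := dwPsi_mem hwim (mem_ball_zero_iff.1 hu)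
      have h2 : 0 < (f (dwPsi w u)).im := hmaps h1
      exact ⟨h2, dwPhi_mem hwim h2⟩
    have hgd : DifferentiableOn ℂ g (ball 0 1) := by
      intro u hu
      have hu' := mem_ball_zero_iff.1 hu
      have h1 : 0 < (dwPsi w u).im := dwPsi_mem hwim hu'
      have hfd : DifferentiableAt ℂ f (dwPsi w u) := hholo.differentiableAt (hS.mem_nhds h1)
      have hfs : 0 < (f (dwPsi w u)).im := hmaps h1
      exact (((dwPhi_diffAt hwim hfs).comp _ hfd).comp u (dwPsi_diffAt hu')).differentiableWithinAt
    have hg0 : g 0 = 0 := by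
      rw [hg]
      simp only
      rw [dwPsi_zero, hfw, dwPhi]
      simp
    have hfψ : ∀ u ∈ ball (0:ℂ) 1, f (dwPsi w u) = dwPsi w (g u) := by
      intro u hu
      exact (dwPsi_phi hwim (hgmem u hu).1).symm
    have hiter : ∀ n : ℕ, 0 < (f^[n] z).im ∧ g^[n] (dwPhi w z) = dwPhi w (f^[n] z) := by
      intro n
      induction n with
      | zero => exact ⟨hzim, rfl⟩
      | succ n ih =>
        obtain ⟨h1, h2⟩ := ih
        refine ⟨?_, ?_⟩
        · rw [Function.iterate_succ_apply']
          exact hmaps h1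
        · rw [Function.iterate_succ_apply', Function.iterate_succ_apply', h2]
          show dwPhi w (f (dwPsi w (dwPhi w (f^[n] z)))) = dwPhi w (f (f^[n] z))
          rw [dwPsi_phi hwim h1]
    have hmapsg : MapsTo g (ball 0 1) (ball (g 0) 1) := by
      rw [hg0]
      intro u hu
      exact mem_ball_zero_iff.2 (hgmem u hu).2
    have hle : ∀ u ∈ ball (0:ℂ) 1, ‖dslope g 0 u‖ ≤ 1 := by
      intro u hu
      simpa using Complex.norm_dslope_le_div_of_mapsTo_ball hgd (hmapsg.mono_right ball_subset_closedBall) hu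
    have hlt : ∀ u ∈ ball (0:ℂ) 1, ‖dslope g 0 u‖ < 1 := by
      intro u hu
      rcases lt_or_eq_of_le (hle u hu) with h | h
      · exact h
      exfalso
      set C := dslope g 0 u with hCdef
      have heq : EqOn g (fun v => g 0 + (v - 0) • C) (ball 0 1) :=
        Complex.affine_of_mapsTo_ball_of_exists_norm_dslope_eq_div hgd (hmapsg.mono_right ball_subset_closedBall) hu
          (by rw [h]; norm_num)
      have hrot : ∀ v ∈ ball (0:ℂ) 1, g v = v * C := by
        intro v hv
        have := heq hv
        simpa [hg0, smul_eq_mul, sub_zero] using this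
      have hC : ‖C‖ = 1 := h
      have hC0 : C ≠ 0 := by
        intro h0'
        rw [h0'] at hC
        simp at hC
      have hfeq : ∀ v : ℂ, 0 < v.im → f v = dwPsi w (dwPhi w v * C) := by
        intro v hv
        have h1 : ‖dwPhi w v‖ < 1 := dwPhi_mem hwim hv
        have h2 := hfψ (dwPhi w v) (mem_ball_zero_iff.2 h1)
        rw [dwPsi_phi hwim hv] at h2
        rw [h2, hrot _ (mem_ball_zero_iff.2 h1)]
      have hnormC : ∀ v : ℂ, 0 < v.im → ‖C⁻¹ * dwPhi w v‖ < 1 := by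
        intro v hv
        rw [norm_mul, norm_inv, hC, inv_one, one_mul]
        exact dwPhi_mem hwim hv
      refine hnotaut ⟨fun v => dwPsi w (C⁻¹ * dwPhi w v), ?_, ?_, ?_, ?_⟩
      · intro v hv
        exact dwPsi_mem hwim (hnormC v hv)
      · intro v hv
        have hv' : 0 < v.im := hv
        exact ((dwPsi_diffAt (hnormC v hv')).comp v
          ((differentiableAt_const _).mul (dwPhi_diffAt hwim hv'))).differentiableWithinAt
      · intro v hv
        have hv' : 0 < v.im := hv
        show dwPsi w (C⁻¹ * dwPhi w (f v)) = v
        rw [hfeq v hv']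
        have hn : ‖dwPhi w v * C‖ < 1 := by
          rw [norm_mul, hC, mul_one]
          exact dwPhi_mem hwim hv'
        rw [dwPhi_psi hwim hn, mul_comm (dwPhi w v) C, inv_mul_cancel_left₀ hC0]
        exact dwPsi_phi hwim hv'
      · intro v hv
        have hv' : 0 < v.im := hv
        show f (dwPsi w (C⁻¹ * dwPhi w v)) = v
        have hn := hnormC v hv'
        have hGv : 0 < (dwPsi w (C⁻¹ * dwPhi w v)).im := dwPsi_mem hwim hn
        rw [hfeq _ hGv, dwPhi_psi hwim hn, mul_comm C⁻¹ (dwPhi w v), mul_assoc,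
          inv_mul_cancel₀ hC0, mul_one]
        exact dwPsi_phi hwim hv'
    have hφz : ‖dwPhi w z‖ < 1 := dwPhi_mem hwim hzim
    have hconv0 : Tendsto (fun n : ℕ => g^[n] (dwPhi w z)) atTop (nhds 0) :=
      disk_iter g hgd hg0 hlt (mem_ball_zero_iff.2 hφz)
    have hψc : ContinuousAt (dwPsi w) 0 := (dwPsi_diffAt (by simp)).continuousAt
    have hcomp : Tendsto (fun n : ℕ => dwPsi w (g^[n] (dwPhi w z))) atTop (nhds (dwPsi w 0)) :=
      hψc.tendsto.comp hconv0
    rw [dwPsi_zero] at hcomp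
    refine hcomp.congr fun n => ?_
    rw [(hiter n).2, dwPsi_phi hwim (hiter n).1]
  refine ⟨?_, key⟩
  intro w₁ hw₁ w₂ hw₂ h1 h2
  have hconv := key w₁ hw₁ h1 w₂ hw₂
  have hfix : (fun n : ℕ => f^[n] w₂) = fun _ => w₂ :=
    funext fun n => Function.iterate_fixed h2 n
  rw [hfix] at hconv
  exact (tendsto_nhds_unique tendsto_const_nhds hconv).symm
end
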